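/- Let f, g be polynomials in ℝ≥0[x_1,...,x_n] (nonnegative coefficients) such that f and g both have saturated Newton polytope and both Newton(f), Newton(g) are generalized permutahedra. Then Newton(fg) = Newton(f) + Newton(g) is a generalized permutahedron and fg has saturated Newton polytope. -/

import Mathlib

open Finset MvPolynomial
open scoped Pointwise

/-- A submodular function on subsets of `[n]`. -/
def Submodular {n : ℕ} (z : Finset (Fin n) → ℝ) : Prop :=
  z ∅ = 0 ∧ ∀ I J : Finset (Fin n), z (I ∪ J) + z (I ∩ J) ≤ z I + z J

/-- The generalized permutahedron associated to `z`. -/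
def GenPerm {n : ℕ} (z : Finset (Fin n) → ℝ) : Set (Fin n → ℝ) :=
  {t | (∀ I : Finset (Fin n), I ≠ univ → ∑ i ∈ I, t i ≤ z I) ∧ ∑ i, t i = z univ}

/-- A set is a generalized permutahedron if it is `P(z)` for some submodular `z`. -/
def IsGenPerm {n : ℕ} (S : Set (Fin n → ℝ)) : Prop :=
  ∃ z : Finset (Fin n) → ℝ, Submodular z ∧ S = GenPerm z

/-- The support of a polynomial, as a set of points of `ℝ^n` (exponent vectors). -/
def supportPts {n : ℕ} (f : MvPolynomial (Fin n) ℝ) : Set (Fin n → ℝ) :=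
  (fun d : Fin n →₀ ℕ => fun i => (d i : ℝ)) '' (f.support : Set (Fin n →₀ ℕ))

/-- The Newton polytope of a polynomial: the convex hull of its support. -/
def newton {n : ℕ} (f : MvPolynomial (Fin n) ℝ) : Set (Fin n → ℝ) :=
  convexHull ℝ (supportPts f)

/-- `f` has saturated Newton polytope: every lattice point of `newton f` is an
exponent vector of `f`. -/
def SNP {n : ℕ} (f : MvPolynomial (Fin n) ℝ) : Prop :=
  ∀ α : Fin n → ℤ, (fun i => (α i : ℝ)) ∈ newton f →
    ∃ d ∈ f.support, ∀ i, ((d i : ℤ) = α i)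

namespace GPAux

variable {n : ℕ}

def cEmb (n : ℕ) : Fin n ↪ Fin (n+1) := ⟨Fin.castSucc, Fin.castSucc_injective n⟩

def mapC (J : Finset (Fin n)) : Finset (Fin (n+1)) := J.map (cEmb n)

def preC (I : Finset (Fin (n+1))) : Finset (Fin n) :=
  Finset.univ.filter (fun j => j.castSucc ∈ I)

@[simp] lemma mem_mapC {J : Finset (Fin n)} {x : Fin (n+1)} :
    x ∈ mapC J ↔ ∃ j ∈ J, j.castSucc = x := by
  simp [mapC, cEmb]

@[simp] lemma castSucc_mem_mapC {J : Finset (Fin n)} {j : Fin n} :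
    j.castSucc ∈ mapC J ↔ j ∈ J := by
  simp only [mem_mapC]
  exact ⟨fun ⟨k, hk, he⟩ => by rwa [← Fin.castSucc_injective n he], fun h => ⟨j, h, rfl⟩⟩

lemma last_not_mem_mapC (J : Finset (Fin n)) : Fin.last n ∉ mapC J := by
  simp only [mem_mapC]
  rintro ⟨j, -, hj⟩
  exact (Fin.castSucc_lt_last j).ne hj

@[simp] lemma mem_preC {I : Finset (Fin (n+1))} {j : Fin n} :
    j ∈ preC I ↔ j.castSucc ∈ I := by simp [preC]

lemma mapC_union (I J : Finset (Fin n)) : mapC (I ∪ J) = mapC I ∪ mapC J := by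
  ext x; simp only [mem_mapC, mem_union]; aesop

lemma mapC_inter (I J : Finset (Fin n)) : mapC (I ∩ J) = mapC I ∩ mapC J := by
  ext x
  simp only [mem_mapC, mem_inter]
  constructor
  · rintro ⟨j, ⟨h1, h2⟩, rfl⟩; exact ⟨⟨j, h1, rfl⟩, ⟨j, h2, rfl⟩⟩
  · rintro ⟨⟨j, h1, rfl⟩, ⟨k, h2, hk⟩⟩
    exact ⟨j, ⟨h1, by rwa [← Fin.castSucc_injective n hk]⟩, rfl⟩

lemma mapC_mono {I J : Finset (Fin n)} (h : I ⊆ J) : mapC I ⊆ mapC J :=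
  Finset.map_subset_map.mpr h

@[simp] lemma mapC_empty : mapC (∅ : Finset (Fin n)) = ∅ := rfl

lemma insert_mapC_union (I J : Finset (Fin n)) :
    insert (Fin.last n) (mapC I) ∪ mapC J = insert (Fin.last n) (mapC (I ∪ J)) := by
  rw [mapC_union]; ext x; simp only [mem_union, mem_insert]; tauto

lemma union_insert_mapC (I J : Finset (Fin n)) :
    mapC I ∪ insert (Fin.last n) (mapC J) = insert (Fin.last n) (mapC (I ∪ J)) := by
  rw [mapC_union]; ext x; simp only [mem_union, mem_insert]; tauto

lemma insert_mapC_inter_right (I J : Finset (Fin n)) :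
    insert (Fin.last n) (mapC I) ∩ mapC J = mapC (I ∩ J) := by
  rw [mapC_inter]; ext x
  simp only [mem_inter, mem_insert]
  constructor
  · rintro ⟨h1 | h1, h2⟩
    · exact absurd (h1 ▸ h2) (last_not_mem_mapC J)
    · exact ⟨h1, h2⟩
  · tauto

lemma inter_insert_mapC_right (I J : Finset (Fin n)) :
    mapC I ∩ insert (Fin.last n) (mapC J) = mapC (I ∩ J) := by
  rw [Finset.inter_comm, insert_mapC_inter_right, Finset.inter_comm]

lemma insert_mapC_union_insert (I J : Finset (Fin n)) :
    insert (Fin.last n) (mapC I) ∪ insert (Fin.last n) (mapC J)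
      = insert (Fin.last n) (mapC (I ∪ J)) := by
  rw [mapC_union]; ext x; simp only [mem_union, mem_insert]; tauto

lemma insert_mapC_inter_insert (I J : Finset (Fin n)) :
    insert (Fin.last n) (mapC I) ∩ insert (Fin.last n) (mapC J)
      = insert (Fin.last n) (mapC (I ∩ J)) := by
  rw [mapC_inter]; ext x; simp only [mem_inter, mem_insert]; tauto

lemma insert_mapC_univ : insert (Fin.last n) (mapC (univ : Finset (Fin n))) = univ := by
  ext x
  simp only [mem_insert, mem_univ, iff_true]
  cases x using Fin.lastCases with
  | last => exact Or.inl rfl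
  | cast j => exact Or.inr (by simp)

lemma mapC_ne_univ (J : Finset (Fin n)) : mapC J ≠ (univ : Finset (Fin (n+1))) := by
  intro h
  exact last_not_mem_mapC J (h ▸ mem_univ _)

lemma mapC_preC_of_not_mem {I : Finset (Fin (n+1))} (h : Fin.last n ∉ I) :
    mapC (preC I) = I := by
  ext x
  cases x using Fin.lastCases with
  | last =>
    simp only [mem_mapC]
    constructor
    · rintro ⟨j, -, hj⟩; exact absurd hj (Fin.castSucc_lt_last j).ne
    · intro hl; exact absurd hl h
  | cast j => simp

lemma insert_mapC_preC_of_mem {I : Finset (Fin (n+1))} (h : Fin.last n ∈ I) :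
    insert (Fin.last n) (mapC (preC I)) = I := by
  ext x
  cases x using Fin.lastCases with
  | last => simp [h]
  | cast j => simp [(Fin.castSucc_lt_last j).ne]

lemma insert_mapC_eq_univ_iff {I : Finset (Fin n)} :
    insert (Fin.last n) (mapC I) = univ ↔ I = univ := by
  constructor
  · intro h
    ext j
    simp only [mem_univ, iff_true]
    have : j.castSucc ∈ insert (Fin.last n) (mapC I) := h ▸ mem_univ _
    rcases mem_insert.mp this with h1 | h1
    · exact absurd h1 (Fin.castSucc_lt_last j).ne
    · exact castSucc_mem_mapC.mp h1
  · rintro rfl; exact insert_mapC_univ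

lemma sum_mapC (J : Finset (Fin n)) (h : Fin (n+1) → ℝ) :
    ∑ i ∈ mapC J, h i = ∑ j ∈ J, h j.castSucc := Finset.sum_map J (cEmb n) h

lemma sum_insert_mapC (J : Finset (Fin n)) (h : Fin (n+1) → ℝ) :
    ∑ i ∈ insert (Fin.last n) (mapC J), h i = h (Fin.last n) + ∑ j ∈ J, h j.castSucc := by
  rw [Finset.sum_insert (last_not_mem_mapC J), sum_mapC]

lemma sum_snoc_mapC (J : Finset (Fin n)) (y : Fin n → ℝ) (a : ℝ) :
    ∑ i ∈ mapC J, Fin.snoc y a i = ∑ j ∈ J, y j := by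
  rw [sum_mapC]; exact Finset.sum_congr rfl fun j _ => by simp

lemma sum_snoc_insert_mapC (J : Finset (Fin n)) (y : Fin n → ℝ) (a : ℝ) :
    ∑ i ∈ insert (Fin.last n) (mapC J), Fin.snoc y a i = a + ∑ j ∈ J, y j := by
  rw [sum_insert_mapC]
  simp only [Fin.snoc_last]
  congr 1
  exact Finset.sum_congr rfl fun j _ => by simp

end GPAux

namespace GPAux

variable {n : ℕ}

lemma sum_le_of_mem {z : Finset (Fin n) → ℝ} {t : Fin n → ℝ} (ht : t ∈ GenPerm z) :
    ∀ I : Finset (Fin n), ∑ i ∈ I, t i ≤ z I := by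
  intro I
  by_cases h : I = univ
  · subst h; exact le_of_eq ht.2
  · exact ht.1 I h

/-- marginal of adding `last` is antitone -/
lemma marg_antitone {z : Finset (Fin (n+1)) → ℝ} (hz : Submodular z)
    {A B : Finset (Fin n)} (h : A ⊆ B) :
    z (insert (Fin.last n) (mapC B)) + z (mapC A)
      ≤ z (mapC B) + z (insert (Fin.last n) (mapC A)) := by
  have h2 := hz.2 (insert (Fin.last n) (mapC A)) (mapC B)
  rw [insert_mapC_union, insert_mapC_inter_right, Finset.union_eq_right.mpr h,
    Finset.inter_eq_left.mpr h] at h2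
  linarith

/-- `min` of the contraction pair is submodular -/
lemma submodular_min {z : Finset (Fin (n+1)) → ℝ} (hz : Submodular z) {a : ℝ}
    (ha : a ≤ z {Fin.last n}) :
    Submodular (fun I : Finset (Fin n) =>
      min (z (mapC I)) (z (insert (Fin.last n) (mapC I)) - a)) := by
  set u : Finset (Fin n) → ℝ := fun I => z (mapC I) with hu
  set v : Finset (Fin n) → ℝ := fun I => z (insert (Fin.last n) (mapC I)) - a with hv
  have husub : ∀ I J, u (I ∪ J) + u (I ∩ J) ≤ u I + u J := by
    intro I J
    have := hz.2 (mapC I) (mapC J)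
    rw [← mapC_union, ← mapC_inter] at this
    simpa [hu] using this
  have hvsub : ∀ I J, v (I ∪ J) + v (I ∩ J) ≤ v I + v J := by
    intro I J
    have := hz.2 (insert (Fin.last n) (mapC I)) (insert (Fin.last n) (mapC J))
    rw [insert_mapC_union_insert, insert_mapC_inter_insert] at this
    simp only [hv]
    linarith
  have hmono : ∀ I J, I ⊆ J → v J + u I ≤ v I + u J := by
    intro I J h
    have := marg_antitone hz h
    simp only [hu, hv]
    linarith
  constructor
  · show min (u ∅) (v ∅) = 0
    have hu0 : u ∅ = 0 := by simp [hu, hz.1]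
    have hv0 : 0 ≤ v ∅ := by
      simp only [hv, mapC_empty]
      have : (insert (Fin.last n) (∅ : Finset (Fin (n+1)))) = {Fin.last n} := rfl
      rw [this]; linarith
    rw [hu0]; exact min_eq_left hv0
  · intro I J
    show min (u (I ∪ J)) (v (I ∪ J)) + min (u (I ∩ J)) (v (I ∩ J))
        ≤ min (u I) (v I) + min (u J) (v J)
    rcases le_total (u I) (v I) with h1 | h1 <;> rcases le_total (u J) (v J) with h2 | h2
    · rw [min_eq_left h1, min_eq_left h2]
      have := husub I J
      have := min_le_left (u (I ∪ J)) (v (I ∪ J))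
      have := min_le_left (u (I ∩ J)) (v (I ∩ J))
      linarith
    · -- u I ≤ v I, v J ≤ u J : bound by u I + v J
      rw [min_eq_left h1, min_eq_right h2]
      have hm := hmono J (I ∪ J) Finset.subset_union_right
      have := husub I J
      have := min_le_right (u (I ∪ J)) (v (I ∪ J))
      have := min_le_left (u (I ∩ J)) (v (I ∩ J))
      linarith
    · rw [min_eq_right h1, min_eq_left h2]
      have hm := hmono I (I ∪ J) Finset.subset_union_left
      have := husub I J
      have := min_le_right (u (I ∪ J)) (v (I ∪ J))
      have := min_le_left (u (I ∩ J)) (v (I ∩ J))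
      linarith
    · rw [min_eq_right h1, min_eq_right h2]
      have := hvsub I J
      have := min_le_right (u (I ∪ J)) (v (I ∪ J))
      have := min_le_right (u (I ∩ J)) (v (I ∩ J))
      linarith

/-- lifting a point of the contracted polytope -/
lemma snoc_mem_genPerm {z : Finset (Fin (n+1)) → ℝ} {w : Finset (Fin n) → ℝ}
    {y : Fin n → ℝ} {a : ℝ} (hy : y ∈ GenPerm w)
    (hle1 : ∀ J, w J ≤ z (mapC J))
    (hle2 : ∀ J, w J ≤ z (insert (Fin.last n) (mapC J)) - a)
    (huniv : w univ = z univ - a) :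
    Fin.snoc y a ∈ GenPerm z := by
  constructor
  · intro I hI
    by_cases hL : Fin.last n ∈ I
    · have hIeq : insert (Fin.last n) (mapC (preC I)) = I := insert_mapC_preC_of_mem hL
      rw [← hIeq, sum_snoc_insert_mapC]
      have h1 : ∑ j ∈ preC I, y j ≤ w (preC I) := sum_le_of_mem hy _
      have h2 := hle2 (preC I)
      linarith
    · have hIeq : mapC (preC I) = I := mapC_preC_of_not_mem hL
      rw [← hIeq, sum_snoc_mapC]
      have h1 : ∑ j ∈ preC I, y j ≤ w (preC I) := sum_le_of_mem hy _
      have h2 := hle1 (preC I)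
      linarith
  · have : ∑ i, Fin.snoc y a i = (∑ j : Fin n, y j) + a := by
      rw [Fin.sum_univ_castSucc]
      simp
    rw [this, hy.2, huniv]
    ring

end GPAux

namespace GPAux

theorem tight_exists : ∀ (n : ℕ) (z : Finset (Fin n) → ℝ), Submodular z →
    ∀ I0 : Finset (Fin n), ∃ g ∈ GenPerm z, ∑ i ∈ I0, g i = z I0 := by
  intro n
  induction n with
  | zero =>
    intro z hz I0
    have hI0 : I0 = ∅ := Finset.eq_empty_of_isEmpty I0
    have huniv : (univ : Finset (Fin 0)) = ∅ := Finset.univ_eq_empty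
    refine ⟨0, ⟨?_, ?_⟩, ?_⟩
    · intro I hI
      exact absurd ((Finset.eq_empty_of_isEmpty I).trans huniv.symm) hI
    · simp [huniv, hz.1]
    · simp [hI0, hz.1]
  | succ n IH =>
    intro z hz I0
    set L := Fin.last n with hL
    set J0 := preC I0 with hJ0
    set a := z (insert L (mapC J0)) - z (mapC J0) with ha
    have ha_high : a ≤ z {L} := by
      have := marg_antitone hz (Finset.empty_subset J0)
      have he : (insert L (∅ : Finset (Fin (n+1)))) = {L} := rfl
      rw [mapC_empty] at this
      rw [he, hz.1] at this
      simp only [ha]; linarith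
    have ha_low : z univ - z (mapC univ) ≤ a := by
      have := marg_antitone hz (Finset.subset_univ J0)
      rw [insert_mapC_univ] at this
      simp only [ha]; linarith
    set w : Finset (Fin n) → ℝ := fun I => min (z (mapC I)) (z (insert L (mapC I)) - a)
      with hw
    have hwsub : Submodular w := submodular_min hz ha_high
    have hwuniv : w univ = z univ - a := by
      show min (z (mapC (univ : Finset (Fin n)))) (z (insert L (mapC univ)) - a) = z univ - a
      rw [insert_mapC_univ]
      exact min_eq_right (by linarith)
    have hwJ0 : w J0 = z (mapC J0) := by
      show min (z (mapC J0)) (z (insert L (mapC J0)) - a) = z (mapC J0)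
      rw [ha, sub_sub_cancel, min_self]
    obtain ⟨y, hy, hyt⟩ := IH w hwsub J0
    refine ⟨Fin.snoc y a, snoc_mem_genPerm hy (fun J => min_le_left _ _)
      (fun J => min_le_right _ _) hwuniv, ?_⟩
    by_cases hLI : L ∈ I0
    · have hIeq : insert L (mapC J0) = I0 := insert_mapC_preC_of_mem hLI
      rw [← hIeq, sum_snoc_insert_mapC, hyt, hwJ0]
      simp only [ha]; ring
    · have hIeq : mapC J0 = I0 := mapC_preC_of_not_mem hLI
      rw [← hIeq, sum_snoc_mapC, hyt, hwJ0]

end GPAux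

namespace GPAux

theorem decomp : ∀ (n : ℕ) (z1 z2 : Finset (Fin n) → ℝ), Submodular z1 → Submodular z2 →
    ∀ t : Fin n → ℝ, t ∈ GenPerm (fun I => z1 I + z2 I) →
    ∃ t1 t2 : Fin n → ℝ, t1 ∈ GenPerm z1 ∧ t2 ∈ GenPerm z2 ∧ t = t1 + t2 ∧
      ((∀ I, ∃ m : ℤ, z1 I = m) → (∀ I, ∃ m : ℤ, z2 I = m) → (∀ i, ∃ m : ℤ, t i = m) →
        (∀ i, ∃ m : ℤ, t1 i = m) ∧ (∀ i, ∃ m : ℤ, t2 i = m)) := by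
  intro n
  induction n with
  | zero =>
    intro z1 z2 hz1 hz2 t ht
    have huniv : (univ : Finset (Fin 0)) = ∅ := Finset.univ_eq_empty
    refine ⟨t, 0, ⟨?_, ?_⟩, ⟨?_, ?_⟩, ?_, ?_⟩
    · intro I hI; exact absurd ((Finset.eq_empty_of_isEmpty I).trans huniv.symm) hI
    · have := ht.2; simp only [huniv, hz1.1, hz2.1] at this ⊢
      simpa using this
    · intro I hI; exact absurd ((Finset.eq_empty_of_isEmpty I).trans huniv.symm) hI
    · simp [huniv, hz2.1]
    · funext i; exact i.elim0
    · intro _ _ hti; exact ⟨hti, fun i => ⟨0, by simp⟩⟩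
  | succ n IH =>
    intro z1 z2 hz1 hz2 t ht
    set L := Fin.last n with hLdef
    have hT : ∀ S : Finset (Fin (n+1)), ∑ i ∈ S, t i ≤ z1 S + z2 S := sum_le_of_mem ht
    have hTuniv : ∑ i, t i = z1 univ + z2 univ := ht.2
    set α : Finset (Fin n) → ℝ :=
      fun I => z1 (insert L (mapC I)) + z2 (mapC I) - ∑ i ∈ mapC I, t i with hαdef
    set a : ℝ := (Finset.univ : Finset (Finset (Fin n))).inf' Finset.univ_nonempty α
      with hadef
    set b : ℝ := t L - a with hbdef
    have hab : a + b = t L := by rw [hbdef]; ring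
    -- the key uncrossing inequality
    have key : ∀ I J : Finset (Fin n),
        ∑ i ∈ insert L (mapC I), t i + ∑ i ∈ mapC J, t i
          ≤ z1 (mapC I) + z1 (insert L (mapC J)) + z2 (insert L (mapC I)) + z2 (mapC J) := by
      intro I J
      have hsum : ∑ i ∈ insert L (mapC I) ∪ mapC J, t i
          + ∑ i ∈ insert L (mapC I) ∩ mapC J, t i
          = ∑ i ∈ insert L (mapC I), t i + ∑ i ∈ mapC J, t i := Finset.sum_union_inter
      rw [insert_mapC_union, insert_mapC_inter_right] at hsum
      have h1 := hT (insert L (mapC (I ∪ J)))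
      have h2 := hT (mapC (I ∩ J))
      have h3 := hz1.2 (mapC I) (insert L (mapC J))
      rw [union_insert_mapC, inter_insert_mapC_right] at h3
      have h4 := hz2.2 (insert L (mapC I)) (mapC J)
      rw [insert_mapC_union, insert_mapC_inter_right] at h4
      linarith
    have ha_le : ∀ I : Finset (Fin n),
        a ≤ z1 (insert L (mapC I)) + z2 (mapC I) - ∑ i ∈ mapC I, t i :=
      fun I => Finset.inf'_le α (Finset.mem_univ I)
    have ha_ge : ∀ I : Finset (Fin n),
        ∑ i ∈ insert L (mapC I), t i - z1 (mapC I) - z2 (insert L (mapC I)) ≤ a := by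
      intro I
      apply Finset.le_inf'
      intro J _
      have := key I J
      rw [hαdef]
      simp only
      linarith
    -- bounds on a and b
    have hsing : (insert L (∅ : Finset (Fin (n+1)))) = {L} := rfl
    have ha_high : a ≤ z1 {L} := by
      have := ha_le ∅
      rw [mapC_empty, hsing, hz2.1, Finset.sum_empty] at this
      linarith
    have hb_high : b ≤ z2 {L} := by
      have := ha_ge ∅
      rw [mapC_empty, hsing, hz1.1, Finset.sum_singleton] at this
      rw [hbdef]
      linarith
    have hmapCuniv_sum : ∑ i ∈ mapC (univ : Finset (Fin n)), t i = (∑ i, t i) - t L := by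
      rw [sum_mapC]
      rw [Fin.sum_univ_castSucc (f := t)]
      ring
    have hA1 : z1 univ - a ≤ z1 (mapC (univ : Finset (Fin n))) := by
      have := ha_ge univ
      rw [insert_mapC_univ] at this
      have h2 : ∑ i ∈ (univ : Finset (Fin (n+1))), t i = z1 univ + z2 univ := hTuniv
      linarith
    have hA2 : z2 univ - b ≤ z2 (mapC (univ : Finset (Fin n))) := by
      have := ha_le univ
      rw [insert_mapC_univ, hmapCuniv_sum, hTuniv] at this
      rw [hbdef]
      linarith
    -- contracted submodular functions
    set w1 : Finset (Fin n) → ℝ :=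
      fun I => min (z1 (mapC I)) (z1 (insert L (mapC I)) - a) with hw1def
    set w2 : Finset (Fin n) → ℝ :=
      fun I => min (z2 (mapC I)) (z2 (insert L (mapC I)) - b) with hw2def
    have hw1sub : Submodular w1 := submodular_min hz1 ha_high
    have hw2sub : Submodular w2 := submodular_min hz2 hb_high
    have hw1univ : w1 univ = z1 univ - a := by
      show min (z1 (mapC (univ : Finset (Fin n)))) (z1 (insert L (mapC univ)) - a)
        = z1 univ - a
      rw [insert_mapC_univ]
      exact min_eq_right (by linarith)
    have hw2univ : w2 univ = z2 univ - b := by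
      show min (z2 (mapC (univ : Finset (Fin n)))) (z2 (insert L (mapC univ)) - b)
        = z2 univ - b
      rw [insert_mapC_univ]
      exact min_eq_right (by linarith)
    -- the restricted vector
    set t' : Fin n → ℝ := fun j => t j.castSucc with ht'def
    have ht' : t' ∈ GenPerm (fun I => w1 I + w2 I) := by
      constructor
      · intro I _
        have hsum : ∑ j ∈ I, t' j = ∑ i ∈ mapC I, t i := (sum_mapC I t).symm
        have hins : ∑ i ∈ insert L (mapC I), t i = t L + ∑ i ∈ mapC I, t i :=
          Finset.sum_insert (last_not_mem_mapC I)
        have h1 : ∑ i ∈ mapC I, t i ≤ z1 (mapC I) + z2 (mapC I) := hT _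
        have h2 : ∑ i ∈ mapC I, t i ≤ z1 (mapC I) + (z2 (insert L (mapC I)) - b) := by
          have := ha_ge I
          rw [hbdef]
          linarith
        have h3 : ∑ i ∈ mapC I, t i ≤ (z1 (insert L (mapC I)) - a) + z2 (mapC I) := by
          have := ha_le I
          linarith
        have h4 : ∑ i ∈ mapC I, t i
            ≤ (z1 (insert L (mapC I)) - a) + (z2 (insert L (mapC I)) - b) := by
          have := hT (insert L (mapC I))
          linarith
        show ∑ j ∈ I, t' j ≤ min (z1 (mapC I)) (z1 (insert L (mapC I)) - a)
          + min (z2 (mapC I)) (z2 (insert L (mapC I)) - b)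
        rw [hsum]
        rcases min_cases (z1 (mapC I)) (z1 (insert L (mapC I)) - a) with ⟨e1, -⟩ | ⟨e1, -⟩ <;>
          rcases min_cases (z2 (mapC I)) (z2 (insert L (mapC I)) - b) with ⟨e2, -⟩ | ⟨e2, -⟩ <;>
          rw [e1, e2] <;> linarith
      · show ∑ j, t' j = w1 univ + w2 univ
        rw [hw1univ, hw2univ]
        have : ∑ i, t i = (∑ j, t' j) + t L := Fin.sum_univ_castSucc (f := t)
        linarith
    obtain ⟨y1, y2, hy1, hy2, hty, hint⟩ := IH w1 w2 hw1sub hw2sub t' ht'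
    refine ⟨Fin.snoc y1 a, Fin.snoc y2 b, ?_, ?_, ?_, ?_⟩
    · exact snoc_mem_genPerm hy1 (fun J => min_le_left _ _) (fun J => min_le_right _ _) hw1univ
    · exact snoc_mem_genPerm hy2 (fun J => min_le_left _ _) (fun J => min_le_right _ _) hw2univ
    · funext i
      cases i using Fin.lastCases with
      | last =>
        simp only [Pi.add_apply, Fin.snoc_last]
        exact hab.symm
      | cast j =>
        simp only [Pi.add_apply, Fin.snoc_castSucc]
        exact congrFun hty j
    · intro hz1i hz2i hti
      have haint : ∃ m : ℤ, a = m := by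
        obtain ⟨I, -, haeq⟩ := Finset.exists_mem_eq_inf'
          (Finset.univ_nonempty (α := Finset (Fin n))) α
        obtain ⟨m1, hm1⟩ := hz1i (insert L (mapC I))
        obtain ⟨m2, hm2⟩ := hz2i (mapC I)
        choose m hm using hti
        refine ⟨m1 + m2 - ∑ i ∈ mapC I, m i, ?_⟩
        have haI : a = α I := by rw [hadef]; exact haeq
        rw [haI, hαdef]
        simp only
        rw [hm1, hm2]
        rw [Finset.sum_congr rfl (fun i _ => hm i)]
        push_cast
        ring
      obtain ⟨ma, hma⟩ := haint
      have hbint : ∃ m : ℤ, b = m := by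
        obtain ⟨mt, hmt⟩ := hti L
        exact ⟨mt - ma, by rw [hbdef, hmt, hma]; push_cast; ring⟩
      obtain ⟨mb, hmb⟩ := hbint
      have hw1i : ∀ I, ∃ m : ℤ, w1 I = m := by
        intro I
        obtain ⟨m1, hm1⟩ := hz1i (mapC I)
        obtain ⟨m2, hm2⟩ := hz1i (insert L (mapC I))
        rcases min_cases (z1 (mapC I)) (z1 (insert L (mapC I)) - a) with ⟨e, -⟩ | ⟨e, -⟩
        · exact ⟨m1, by rw [hw1def]; simp only; rw [e, hm1]⟩
        · exact ⟨m2 - ma, by rw [hw1def]; simp only; rw [e, hm2, hma]; push_cast; ring⟩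
      have hw2i : ∀ I, ∃ m : ℤ, w2 I = m := by
        intro I
        obtain ⟨m1, hm1⟩ := hz2i (mapC I)
        obtain ⟨m2, hm2⟩ := hz2i (insert L (mapC I))
        rcases min_cases (z2 (mapC I)) (z2 (insert L (mapC I)) - b) with ⟨e, -⟩ | ⟨e, -⟩
        · exact ⟨m1, by rw [hw2def]; simp only; rw [e, hm1]⟩
        · exact ⟨m2 - mb, by rw [hw2def]; simp only; rw [e, hm2, hmb]; push_cast; ring⟩
      have ht'i : ∀ j, ∃ m : ℤ, t' j = m := fun j => hti j.castSucc
      obtain ⟨hy1i, hy2i⟩ := hint hw1i hw2i ht'i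
      constructor
      · intro i
        cases i using Fin.lastCases with
        | last => exact ⟨ma, by simp only [Fin.snoc_last]; exact hma⟩
        | cast j => obtain ⟨m, hm⟩ := hy1i j; exact ⟨m, by simp only [Fin.snoc_castSucc]; exact hm⟩
      · intro i
        cases i using Fin.lastCases with
        | last => exact ⟨mb, by simp only [Fin.snoc_last]; exact hmb⟩
        | cast j => obtain ⟨m, hm⟩ := hy2i j; exact ⟨m, by simp only [Fin.snoc_castSucc]; exact hm⟩

end GPAux

namespace GPAux

variable {n : ℕ}

lemma support_mul_eq {f g : MvPolynomial (Fin n) ℝ}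
    (hf0 : ∀ d, 0 ≤ f.coeff d) (hg0 : ∀ d, 0 ≤ g.coeff d) (d : Fin n →₀ ℕ) :
    d ∈ (f * g).support ↔ ∃ a ∈ f.support, ∃ b ∈ g.support, a + b = d := by
  rw [MvPolynomial.mem_support_iff, MvPolynomial.coeff_mul]
  constructor
  · intro h
    by_contra hc
    push_neg at hc
    apply h
    apply Finset.sum_eq_zero
    rintro ⟨x, y⟩ hxy
    rw [Finset.HasAntidiagonal.mem_antidiagonal] at hxy
    by_cases hx : f.coeff x = 0
    · simp [hx]
    by_cases hy : g.coeff y = 0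
    · simp [hy]
    exact absurd hxy (hc x (MvPolynomial.mem_support_iff.mpr hx) y
      (MvPolynomial.mem_support_iff.mpr hy))
  · rintro ⟨x, hx, y, hy, rfl⟩
    rw [MvPolynomial.mem_support_iff] at hx hy
    have hpos : 0 < ∑ p ∈ Finset.HasAntidiagonal.antidiagonal (x + y), f.coeff p.1 * g.coeff p.2 := by
      apply Finset.sum_pos'
      · intro p _; exact mul_nonneg (hf0 p.1) (hg0 p.2)
      · refine ⟨(x, y), Finset.HasAntidiagonal.mem_antidiagonal.mpr rfl, ?_⟩
        exact mul_pos ((hf0 x).lt_of_ne (Ne.symm hx)) ((hg0 y).lt_of_ne (Ne.symm hy))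
    exact hpos.ne'

lemma supportPts_mul {f g : MvPolynomial (Fin n) ℝ}
    (hf0 : ∀ d, 0 ≤ f.coeff d) (hg0 : ∀ d, 0 ≤ g.coeff d) :
    supportPts (f * g) = supportPts f + supportPts g := by
  ext x
  constructor
  · rintro ⟨d, hd, rfl⟩
    obtain ⟨a, ha, b, hb, rfl⟩ := (support_mul_eq hf0 hg0 d).mp hd
    rw [Set.mem_add]
    refine ⟨_, ⟨a, ha, rfl⟩, _, ⟨b, hb, rfl⟩, ?_⟩
    funext i
    simp [Finsupp.add_apply]
  · intro hx
    rw [Set.mem_add] at hx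
    obtain ⟨u, ⟨a, ha, rfl⟩, v, ⟨b, hb, rfl⟩, rfl⟩ := hx
    refine ⟨a + b, (support_mul_eq hf0 hg0 _).mpr ⟨a, ha, b, hb, rfl⟩, ?_⟩
    funext i
    simp [Finsupp.add_apply]

lemma newton_mul {f g : MvPolynomial (Fin n) ℝ}
    (hf0 : ∀ d, 0 ≤ f.coeff d) (hg0 : ∀ d, 0 ≤ g.coeff d) :
    newton (f * g) = newton f + newton g := by
  unfold newton
  rw [supportPts_mul hf0 hg0, convexHull_add]

/-- the submodular function representing the Newton polytope is integer-valued -/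
lemma z_integral {f : MvPolynomial (Fin n) ℝ} {z : Finset (Fin n) → ℝ}
    (hzsub : Submodular z) (hfz : newton f = GenPerm z) :
    ∀ I, ∃ m : ℤ, z I = m := by
  -- the support is nonempty
  have hne : f.support.Nonempty := by
    obtain ⟨g0, hg0, -⟩ := tight_exists n z hzsub ∅
    rw [← hfz] at hg0
    by_contra hc
    rw [Finset.not_nonempty_iff_eq_empty] at hc
    have : supportPts f = ∅ := by simp [supportPts, hc]
    rw [newton, this, convexHull_empty] at hg0
    exact hg0
  intro I
  set m : ℕ := f.support.sup' hne (fun d => ∑ i ∈ I, d i) with hm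
  -- every point of the Newton polytope satisfies the I-sum bound
  have hbound : ∀ x ∈ newton f, ∑ i ∈ I, x i ≤ (m : ℝ) := by
    have hconv : Convex ℝ {x : Fin n → ℝ | ∑ i ∈ I, x i ≤ (m : ℝ)} := by
      apply convex_halfSpace_le
      constructor
      · intro x y; simp [Finset.sum_add_distrib]
      · intro c x; simp [Finset.mul_sum]
    have hsub : supportPts f ⊆ {x : Fin n → ℝ | ∑ i ∈ I, x i ≤ (m : ℝ)} := by
      rintro x ⟨d, hd, rfl⟩
      have : ∑ i ∈ I, ((d i : ℕ) : ℝ) = ((∑ i ∈ I, d i : ℕ) : ℝ) := by push_cast; rfl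
      simp only [Set.mem_setOf_eq]
      rw [this]
      exact_mod_cast Finset.le_sup' (fun d => ∑ i ∈ I, d i) hd
    intro x hx
    exact convexHull_min hsub hconv hx
  -- z I ≤ m via the tight point
  have h1 : z I ≤ (m : ℝ) := by
    obtain ⟨g0, hg0, hgt⟩ := tight_exists n z hzsub I
    rw [← hfz] at hg0
    rw [← hgt]
    exact hbound g0 hg0
  -- m ≤ z I via the maximizing support point
  have h2 : (m : ℝ) ≤ z I := by
    obtain ⟨d, hd, hdm⟩ := Finset.exists_mem_eq_sup' hne (fun d => ∑ i ∈ I, d i)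
    have hdmem : (fun i => ((d i : ℕ) : ℝ)) ∈ GenPerm z := by
      rw [← hfz]
      exact subset_convexHull ℝ _ ⟨d, hd, rfl⟩
    have hsum : ∑ i ∈ I, ((d i : ℕ) : ℝ) = (m : ℝ) := by
      rw [hm, hdm]; push_cast; rfl
    by_cases hI : I = univ
    · subst hI
      rw [← hsum]
      exact le_of_eq hdmem.2
    · rw [← hsum]
      exact hdmem.1 I hI
  exact ⟨(m : ℤ), by rw [le_antisymm h1 h2]; push_cast; rfl⟩

end GPAux

theorem stmt4 {n : ℕ} (f g : MvPolynomial (Fin n) ℝ)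
    (hf0 : ∀ d, 0 ≤ f.coeff d) (hg0 : ∀ d, 0 ≤ g.coeff d)
    (hf : SNP f) (hg : SNP g)
    (hfN : IsGenPerm (newton f)) (hgN : IsGenPerm (newton g)) :
    newton (f * g) = newton f + newton g ∧ IsGenPerm (newton (f * g)) ∧ SNP (f * g) := by
  obtain ⟨z1, hz1s, hfz1⟩ := hfN
  obtain ⟨z2, hz2s, hgz2⟩ := hgN
  have hnew : newton (f * g) = newton f + newton g := GPAux.newton_mul hf0 hg0
  have hzsum : Submodular (fun I => z1 I + z2 I) := by
    constructor
    · simp [hz1s.1, hz2s.1]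
    · intro I J
      have h1 := hz1s.2 I J
      have h2 := hz2s.2 I J
      simp only
      linarith
  have hEasy : GenPerm z1 + GenPerm z2 ⊆ GenPerm (fun I => z1 I + z2 I) := by
    intro x hx
    rw [Set.mem_add] at hx
    obtain ⟨u, hu, v, hv, rfl⟩ := hx
    constructor
    · intro I hI
      have h1 := hu.1 I hI
      have h2 := hv.1 I hI
      simp only [Pi.add_apply, Finset.sum_add_distrib]
      linarith
    · simp only [Pi.add_apply, Finset.sum_add_distrib]
      rw [hu.2, hv.2]
  have hHard : GenPerm (fun I => z1 I + z2 I) ⊆ GenPerm z1 + GenPerm z2 := by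
    intro x hx
    obtain ⟨t1, t2, h1, h2, heq, -⟩ := GPAux.decomp n z1 z2 hz1s hz2s x hx
    rw [Set.mem_add]
    exact ⟨t1, h1, t2, h2, heq.symm⟩
  have hGP : newton f + newton g = GenPerm (fun I => z1 I + z2 I) := by
    rw [hfz1, hgz2]
    exact Set.Subset.antisymm hEasy hHard
  refine ⟨hnew, ⟨_, hzsum, by rw [hnew, hGP]⟩, ?_⟩
  intro α hα
  rw [hnew, hGP] at hα
  obtain ⟨t1, t2, h1, h2, heq, hint⟩ := GPAux.decomp n z1 z2 hz1s hz2s _ hα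
  obtain ⟨hi1, hi2⟩ := hint (GPAux.z_integral hz1s hfz1) (GPAux.z_integral hz2s hgz2)
    (fun i => ⟨α i, rfl⟩)
  choose β hβ using hi1
  choose γ hγ using hi2
  have e1 : (fun i => (β i : ℝ)) = t1 := (funext hβ).symm
  have e2 : (fun i => (γ i : ℝ)) = t2 := (funext hγ).symm
  have ht1 : (fun i => (β i : ℝ)) ∈ newton f := by rw [hfz1, e1]; exact h1
  have ht2 : (fun i => (γ i : ℝ)) ∈ newton g := by rw [hgz2, e2]; exact h2
  obtain ⟨d1, hd1, hd1e⟩ := hf β ht1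
  obtain ⟨d2, hd2, hd2e⟩ := hg γ ht2
  refine ⟨d1 + d2, (GPAux.support_mul_eq hf0 hg0 _).mpr ⟨d1, hd1, d2, hd2, rfl⟩, ?_⟩
  intro i
  have hsplit : (α i : ℝ) = (β i : ℝ) + (γ i : ℝ) := by
    have hc := congrFun heq i
    rw [← e1, ← e2] at hc
    exact hc
  have hint2 : β i + γ i = α i := by exact_mod_cast hsplit.symm
  have happ : (d1 + d2) i = d1 i + d2 i := Finsupp.add_apply d1 d2 i
  rw [happ]
  push_cast
  rw [hd1e i, hd2e i]
  exact hint2
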